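/- arXiv:1910.06775 — 2 statements merged into one kernel-verified Lean document; each statement's English description precedes it below -/
import Mathlib

section
/- For any bounded operator T on a complex Hilbert space, ‖ |T|² + |T*|² ‖ + 2‖T²‖ ≤ (‖T‖ + ‖T²‖^{1/2})². -/
open scoped InnerProductSpace

section Aux
variable {H : Type*} [NormedAddCommGroup H] [InnerProductSpace ℂ H] [CompleteSpace H]

open ContinuousLinearMap in
lemma key_pointwise (A B : H →L[ℂ] H) (hA : IsSelfAdjoint A) (hB : IsSelfAdjoint B) (x : H) :
    ‖A x‖ ^ 2 + ‖B x‖ ^ 2 ≤ (max (‖A‖ ^ 2) (‖B‖ ^ 2) + ‖A * B‖) * ‖x‖ ^ 2 := by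
  have hsymA : ∀ a b : H, ⟪A a, b⟫_ℂ = ⟪a, A b⟫_ℂ := fun a b =>
    (isSelfAdjoint_iff_isSymmetric.mp hA) a b
  set u := A x with hu
  set v := B x with hv
  have hc : (0:ℝ) ≤ max (‖A‖ ^ 2) (‖B‖ ^ 2) + ‖A * B‖ :=
    add_nonneg ((sq_nonneg ‖A‖).trans (le_max_left _ _)) (norm_nonneg _)
  have h1 : ‖u‖ ^ 2 + ‖v‖ ^ 2 ≤ ‖A u + B v‖ * ‖x‖ := by
    have hsymB : ∀ a b : H, ⟪B a, b⟫_ℂ = ⟪a, B b⟫_ℂ := fun a b =>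
      (isSelfAdjoint_iff_isSymmetric.mp hB) a b
    have heq : (⟪A u + B v, x⟫_ℂ) = (⟪u, u⟫_ℂ) + (⟪v, v⟫_ℂ) := by
      rw [inner_add_left, hsymA u x, hsymB v x, ← hu, ← hv]
    have h0 : (‖u‖ ^ 2 + ‖v‖ ^ 2 : ℝ) = RCLike.re ⟪A u + B v, x⟫_ℂ := by
      rw [heq, map_add, @inner_self_eq_norm_sq ℂ, @inner_self_eq_norm_sq ℂ]
    rw [h0]
    exact (RCLike.re_le_norm _).trans (norm_inner_le_norm _ _)
  have h2 : ‖A u + B v‖ ^ 2 ≤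
      (max (‖A‖ ^ 2) (‖B‖ ^ 2) + ‖A * B‖) * (‖u‖ ^ 2 + ‖v‖ ^ 2) := by
    have hAB : RCLike.re ⟪A u, B v⟫_ℂ ≤ ‖A * B‖ * ‖u‖ * ‖v‖ := by
      have hmv : (⟪A u, B v⟫_ℂ) = ⟪u, (A * B) v⟫_ℂ := by
        rw [ContinuousLinearMap.mul_apply, hsymA u (B v)]
      calc RCLike.re ⟪A u, B v⟫_ℂ ≤ ‖⟪A u, B v⟫_ℂ‖ := RCLike.re_le_norm _
        _ = ‖⟪u, (A * B) v⟫_ℂ‖ := by rw [hmv]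
        _ ≤ ‖u‖ * ‖(A * B) v‖ := norm_inner_le_norm _ _
        _ ≤ ‖u‖ * (‖A * B‖ * ‖v‖) :=
            mul_le_mul_of_nonneg_left (le_opNorm _ _) (norm_nonneg _)
        _ = ‖A * B‖ * ‖u‖ * ‖v‖ := by ring
    have hsq := @norm_add_sq ℂ _ _ _ _ (A u) (B v)
    have hAu : ‖A u‖ ≤ ‖A‖ * ‖u‖ := le_opNorm _ _
    have hBv : ‖B v‖ ≤ ‖B‖ * ‖v‖ := le_opNorm _ _
    have hMa : ‖A‖ ^ 2 ≤ max (‖A‖ ^ 2) (‖B‖ ^ 2) := le_max_left _ _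
    have hMb : ‖B‖ ^ 2 ≤ max (‖A‖ ^ 2) (‖B‖ ^ 2) := le_max_right _ _
    nlinarith [norm_nonneg u, norm_nonneg v, norm_nonneg (A u), norm_nonneg (B v),
      norm_nonneg A, norm_nonneg B, norm_nonneg (A * B), sq_nonneg (‖u‖ - ‖v‖),
      mul_nonneg (norm_nonneg u) (norm_nonneg v)]
  rcases eq_or_lt_of_le (add_nonneg (sq_nonneg ‖u‖) (sq_nonneg ‖v‖)) with hz | hz
  · exact (hz ▸ mul_nonneg hc (sq_nonneg ‖x‖))
  · nlinarith [h1, h2, sq_nonneg ‖x‖, norm_nonneg (A u + B v), norm_nonneg x,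
      mul_pos hz hz, mul_nonneg hc (sq_nonneg ‖x‖)]

open ContinuousLinearMap in
lemma norm_sq_add_sq_le' (A B : H →L[ℂ] H) (hA : IsSelfAdjoint A) (hB : IsSelfAdjoint B)
    (hkey : ∀ x : H, ‖A x‖ ^ 2 + ‖B x‖ ^ 2 ≤ (max (‖A‖ ^ 2) (‖B‖ ^ 2) + ‖A * B‖) * ‖x‖ ^ 2) :
    ‖A ^ 2 + B ^ 2‖ ≤ max (‖A‖ ^ 2) (‖B‖ ^ 2) + ‖A * B‖ := by
  have hsymA : ∀ a b : H, ⟪A a, b⟫_ℂ = ⟪a, A b⟫_ℂ := fun a b =>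
    (isSelfAdjoint_iff_isSymmetric.mp hA) a b
  have hsymB : ∀ a b : H, ⟪B a, b⟫_ℂ = ⟪a, B b⟫_ℂ := fun a b =>
    (isSelfAdjoint_iff_isSymmetric.mp hB) a b
  set c : ℝ := max (‖A‖ ^ 2) (‖B‖ ^ 2) + ‖A * B‖ with hcdef
  have hc : (0:ℝ) ≤ c :=
    add_nonneg ((sq_nonneg ‖A‖).trans (le_max_left _ _)) (norm_nonneg _)
  have hXnn : (0 : H →L[ℂ] H) ≤ A ^ 2 + B ^ 2 := by
    have h1 : (0 : H →L[ℂ] H) ≤ A ^ 2 := by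
      simpa [pow_two, hA.star_eq] using star_mul_self_nonneg A
    have h2 : (0 : H →L[ℂ] H) ≤ B ^ 2 := by
      simpa [pow_two, hB.star_eq] using star_mul_self_nonneg B
    exact add_nonneg h1 h2
  have hle : A ^ 2 + B ^ 2 ≤ c • (1 : H →L[ℂ] H) := by
    rw [ContinuousLinearMap.le_def]
    constructor
    · have hsa : IsSelfAdjoint (A ^ 2 + B ^ 2) := (hA.pow 2).add (hB.pow 2)
      have hone : IsSelfAdjoint (c • (1 : H →L[ℂ] H)) :=
        IsSelfAdjoint.smul (star_trivial c) (IsSelfAdjoint.one _)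
      exact (hone.sub hsa).isSymmetric
    · intro x
      have hk := hkey x
      have hx1 : (c • (1 : H →L[ℂ] H) - (A ^ 2 + B ^ 2)) x
          = c • x - (A (A x) + B (B x)) := by
        simp [ContinuousLinearMap.sub_apply, ContinuousLinearMap.smul_apply,
          pow_two, ContinuousLinearMap.mul_apply]
      rw [ContinuousLinearMap.reApplyInnerSelf_apply, hx1]
      have hAA : RCLike.re ⟪A (A x), x⟫_ℂ = ‖A x‖ ^ 2 := by
        rw [hsymA (A x) x]
        exact @inner_self_eq_norm_sq ℂ _ _ _ _ (A x)
      have hBB : RCLike.re ⟪B (B x), x⟫_ℂ = ‖B x‖ ^ 2 := by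
        rw [hsymB (B x) x]
        exact @inner_self_eq_norm_sq ℂ _ _ _ _ (B x)
      have hsm : RCLike.re ⟪c • x, x⟫_ℂ = c * ‖x‖ ^ 2 := by
        rw [RCLike.real_smul_eq_coe_smul (K := ℂ), inner_smul_left, RCLike.conj_ofReal,
          RCLike.re_ofReal_mul, @inner_self_eq_norm_sq ℂ]
      have : RCLike.re ⟪c • x - (A (A x) + B (B x)), x⟫_ℂ
          = c * ‖x‖ ^ 2 - (‖A x‖ ^ 2 + ‖B x‖ ^ 2) := by
        rw [inner_sub_left, inner_add_left, map_sub, map_add, hAA, hBB, hsm]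
      rw [this]
      linarith
  calc ‖A ^ 2 + B ^ 2‖ ≤ ‖c • (1 : H →L[ℂ] H)‖ :=
        CStarAlgebra.norm_le_norm_of_nonneg_of_le hXnn hle
    _ ≤ c := by
        rw [norm_smul, Real.norm_of_nonneg hc]
        calc c * ‖(1 : H →L[ℂ] H)‖ ≤ c * 1 :=
              mul_le_mul_of_nonneg_left ContinuousLinearMap.norm_id_le hc
          _ = c := mul_one c

end Aux

/-- `|T| = (T*T)^{1/2}` via the continuous functional calculus. -/
noncomputable def absOp {H : Type*} [NormedAddCommGroup H] [InnerProductSpace ℂ H]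
    [CompleteSpace H] (X : H →L[ℂ] H) : H →L[ℂ] H :=
  cfc Real.sqrt (star X * X)

section Facts
variable {H : Type*} [NormedAddCommGroup H] [InnerProductSpace ℂ H] [CompleteSpace H]

lemma absOp_nonneg (X : H →L[ℂ] H) : (0 : H →L[ℂ] H) ≤ absOp X :=
  cfc_nonneg fun x _ => Real.sqrt_nonneg x

lemma absOp_sq (X : H →L[ℂ] H) : absOp X ^ 2 = star X * X := by
  have ha : (0 : H →L[ℂ] H) ≤ star X * X := star_mul_self_nonneg X
  rw [pow_two, absOp, ← cfc_mul Real.sqrt Real.sqrt (star X * X)]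
  have hcongr : cfc (fun x => Real.sqrt x * Real.sqrt x) (star X * X) = cfc (id : ℝ → ℝ) (star X * X) :=
    cfc_congr fun x hx => Real.mul_self_sqrt (spectrum_nonneg_of_nonneg ha hx)
  rw [hcongr]
  exact cfc_id ℝ _

lemma absOp_selfAdjoint (X : H →L[ℂ] H) : IsSelfAdjoint (absOp X) :=
  IsSelfAdjoint.of_nonneg (absOp_nonneg X)

lemma norm_absOp (X : H →L[ℂ] H) : ‖absOp X‖ = ‖X‖ := by
  rw [← mul_self_inj_of_nonneg (norm_nonneg _) (norm_nonneg _),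
    ← CStarRing.norm_star_mul_self (x := X), ← CStarRing.norm_star_mul_self (x := absOp X),
    (absOp_selfAdjoint X).star_eq, ← pow_two, absOp_sq]

lemma norm_absOp_mul (T : H →L[ℂ] H) : ‖absOp T * absOp (star T)‖ = ‖T ^ 2‖ := by
  set A := absOp T with hAdef
  set B := absOp (star T) with hBdef
  have hA := absOp_selfAdjoint T
  have hB := absOp_selfAdjoint (star T)
  have hAA : A * A = star T * T := by rw [← pow_two]; exact absOp_sq T
  have hBB : B * B = T * star T := by
    have h := absOp_sq (star T)
    rw [star_star] at h
    rw [← pow_two]; exact h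
  have hAA' : ∀ X : H →L[ℂ] H, A * (A * X) = star T * (T * X) := fun X => by
    rw [← mul_assoc, hAA, mul_assoc]
  have hBB' : ∀ X : H →L[ℂ] H, B * (B * X) = T * (star T * X) := fun X => by
    rw [← mul_assoc, hBB, mul_assoc]
  have n1 : ‖A * B‖ * ‖A * B‖ = ‖T * B‖ * ‖T * B‖ := by
    rw [← CStarRing.norm_star_mul_self (x := A * B), ← CStarRing.norm_star_mul_self (x := T * B)]
    congr 1
    simp only [star_mul, show star A = A from hA.star_eq, show star B = B from hB.star_eq, mul_assoc, hAA']
  have n2 : ‖T * B‖ * ‖T * B‖ = ‖T ^ 2‖ * ‖T ^ 2‖ := by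
    rw [← CStarRing.norm_self_mul_star (x := T * B), ← CStarRing.norm_self_mul_star (x := T ^ 2)]
    congr 1
    simp only [star_mul, show star B = B from hB.star_eq, pow_two, mul_assoc, hBB']
  rw [mul_self_inj_of_nonneg (norm_nonneg _) (norm_nonneg _)] at n1 n2
  rw [n1, n2]

end Facts

/-- For any bounded operator `T`, `‖|T|² + |T*|²‖ + 2‖T²‖ ≤ (‖T‖ + ‖T²‖^{1/2})²`. -/
theorem norm_sq_abs_add_two_norm_sq_le {H : Type*} [NormedAddCommGroup H]
    [InnerProductSpace ℂ H] [CompleteSpace H] (T : H →L[ℂ] H) :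
    ‖absOp T ^ 2 + absOp (star T) ^ 2‖ + 2 * ‖T ^ 2‖ ≤ (‖T‖ + Real.sqrt ‖T ^ 2‖) ^ 2 := by
  set A := absOp T with hAdef
  set B := absOp (star T) with hBdef
  have hA := absOp_selfAdjoint T
  have hB := absOp_selfAdjoint (star T)
  have h := norm_sq_add_sq_le' A B hA hB (key_pointwise A B hA hB)
  rw [norm_absOp T, norm_absOp (star T), norm_star, max_self, norm_absOp_mul T] at h
  have hT2 : ‖T ^ 2‖ ≤ ‖T‖ ^ 2 := by
    rw [pow_two, pow_two]; exact norm_mul_le T T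
  have hs : Real.sqrt ‖T ^ 2‖ ≤ ‖T‖ := by
    rw [show ‖T‖ = Real.sqrt (‖T‖ ^ 2) from (Real.sqrt_sq (norm_nonneg T)).symm]
    exact Real.sqrt_le_sqrt hT2
  have hsq : Real.sqrt ‖T ^ 2‖ ^ 2 = ‖T ^ 2‖ := Real.sq_sqrt (norm_nonneg _)
  have hsnn : 0 ≤ Real.sqrt ‖T ^ 2‖ := Real.sqrt_nonneg _
  nlinarith [h, hs, hsq, hsnn, norm_nonneg T]
end

section
/- Let T = (T_{ij}) be an n×n operator matrix with T_{ij} ∈ B(H), and f, g nonnegative continuous functions on [0,∞) with f(t)g(t) = t. Then w(T) ≤ w(T'), where T' is the n×n complex matrix with entries t'_{ij} = ‖f²(|T_{ij}|)‖^{1/2} ‖g²(|T_{ij}*|)‖^{1/2}. -/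
/-- The numerical radius of an operator on a complex Hilbert space. -/
noncomputable def nr {H : Type*} [NormedAddCommGroup H] [InnerProductSpace ℂ H]
    (T : H →L[ℂ] H) : ℝ :=
  sSup {r : ℝ | ∃ x : H, ‖x‖ = 1 ∧ r = ‖(inner ℂ (T x) x : ℂ)‖}

section aux
variable {H : Type*} [NormedAddCommGroup H] [InnerProductSpace ℂ H] [CompleteSpace H]

lemma nr_bddAbove (T : H →L[ℂ] H) :
    BddAbove {r : ℝ | ∃ x : H, ‖x‖ = 1 ∧ r = ‖(inner ℂ (T x) x : ℂ)‖} := by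
  refine ⟨‖T‖, ?_⟩
  rintro r ⟨x, hx, rfl⟩
  calc ‖(inner ℂ (T x) x : ℂ)‖ ≤ ‖T x‖ * ‖x‖ := norm_inner_le_norm _ _
    _ ≤ ‖T‖ * ‖x‖ * ‖x‖ := by
        gcongr; exact T.le_opNorm x
    _ = ‖T‖ := by rw [hx]; ring

lemma nr_nonneg (T : H →L[ℂ] H) : 0 ≤ nr T := by
  rcases Set.eq_empty_or_nonempty
      {r : ℝ | ∃ x : H, ‖x‖ = 1 ∧ r = ‖(inner ℂ (T x) x : ℂ)‖} with h | ⟨r, hr⟩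
  · unfold nr; rw [h, Real.sSup_empty]
  · refine le_trans ?_ (le_csSup (nr_bddAbove T) hr)
    obtain ⟨x, hx, rfl⟩ := hr
    positivity

lemma inner_le_nr (T : H →L[ℂ] H) (x : H) (hx : ‖x‖ = 1) :
    ‖(inner ℂ (T x) x : ℂ)‖ ≤ nr T :=
  le_csSup (nr_bddAbove T) ⟨x, hx, rfl⟩

lemma sq_le_norm_cfc [Nontrivial H] (h : ℝ → ℝ) (hh : Continuous h) (a : H →L[ℂ] H) :
    h ‖a‖ ^ 2 ≤ ‖cfc (fun t => h t ^ 2) (absOp a)‖ := by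
  have hsa : IsSelfAdjoint (star a * a) := IsSelfAdjoint.star_mul_self a
  have hpos : (0 : H →L[ℂ] H) ≤ star a * a := star_mul_self_nonneg a
  have h1 : ‖star a * a‖ ∈ spectrum ℝ (star a * a) :=
    CStarAlgebra.norm_mem_spectrum_of_nonneg hpos
  have h2 : spectrum ℝ (absOp a) = Real.sqrt '' spectrum ℝ (star a * a) :=
    cfc_map_spectrum Real.sqrt (star a * a) hsa Real.continuous_sqrt.continuousOn
  have h3 : ‖a‖ ∈ spectrum ℝ (absOp a) := by
    rw [h2]
    refine ⟨‖star a * a‖, h1, ?_⟩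
    rw [CStarRing.norm_star_mul_self, Real.sqrt_mul_self (norm_nonneg a)]
  have h4 : h ‖a‖ ^ 2 ∈ spectrum ℝ (cfc (fun t => h t ^ 2) (absOp a)) := by
    have := cfc_map_spectrum (fun t => h t ^ 2) (absOp a)
      (cfc_predicate Real.sqrt (star a * a)) ((hh.pow 2).continuousOn)
    rw [this]
    exact ⟨‖a‖, h3, rfl⟩
  have := spectrum.norm_le_norm_of_mem h4
  rwa [Real.norm_eq_abs, abs_of_nonneg (sq_nonneg _)] at this

lemma norm_le_key [Nontrivial H] (f g : ℝ → ℝ) (hf : Continuous f) (hg : Continuous g)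
    (hf0 : ∀ t, 0 ≤ t → 0 ≤ f t) (hg0 : ∀ t, 0 ≤ t → 0 ≤ g t)
    (hfg : ∀ t, 0 ≤ t → f t * g t = t) (a : H →L[ℂ] H) :
    ‖a‖ ≤ Real.sqrt ‖cfc (fun t => f t ^ 2) (absOp a)‖ *
      Real.sqrt ‖cfc (fun t => g t ^ 2) (absOp (star a))‖ := by
  have h1 : f ‖a‖ ≤ Real.sqrt ‖cfc (fun t => f t ^ 2) (absOp a)‖ := by
    have := Real.sqrt_le_sqrt (sq_le_norm_cfc f hf a)
    rwa [Real.sqrt_sq (hf0 _ (norm_nonneg a))] at this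
  have h2 : g ‖a‖ ≤ Real.sqrt ‖cfc (fun t => g t ^ 2) (absOp (star a))‖ := by
    have := Real.sqrt_le_sqrt (sq_le_norm_cfc g hg (star a))
    rwa [Real.sqrt_sq (by rw [norm_star]; exact hg0 _ (norm_nonneg a)), norm_star] at this
  calc ‖a‖ = f ‖a‖ * g ‖a‖ := (hfg _ (norm_nonneg a)).symm
    _ ≤ _ := by
        apply mul_le_mul h1 h2 (hg0 _ (norm_nonneg a))
        exact Real.sqrt_nonneg _

end aux


/-- If `T` is the `n × n` operator matrix with entries `M i j` acting on `⊕ⁿ H`, and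
`f, g ≥ 0` continuous with `f(t)g(t) = t` on `[0,∞)`, then `w(T) ≤ w(T')` with
`t'_{ij} = ‖f²(|M i j|)‖^{1/2} ‖g²(|M i j*|)‖^{1/2}`. -/
theorem nr_opMatrix_le (n : ℕ) {H : Type*} [NormedAddCommGroup H]
    [InnerProductSpace ℂ H] [CompleteSpace H]
    (M : Fin n → Fin n → (H →L[ℂ] H))
    (T : (PiLp 2 fun _ : Fin n => H) →L[ℂ] (PiLp 2 fun _ : Fin n => H))
    (hT : ∀ x, ∀ i, T x i = ∑ j, M i j (x j))
    (f g : ℝ → ℝ) (hf : Continuous f) (hg : Continuous g)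
    (hf0 : ∀ t, 0 ≤ t → 0 ≤ f t) (hg0 : ∀ t, 0 ≤ t → 0 ≤ g t)
    (hfg : ∀ t, 0 ≤ t → f t * g t = t) :
    nr T ≤ nr (Matrix.toEuclideanCLM (𝕜 := ℂ) (Matrix.of fun i j =>
      ((Real.sqrt ‖cfc (fun t => f t ^ 2) (absOp (M i j))‖ *
        Real.sqrt ‖cfc (fun t => g t ^ 2) (absOp (star (M i j)))‖ : ℝ) : ℂ))) := by
  set t' : Fin n → Fin n → ℝ := fun i j =>
    Real.sqrt ‖cfc (fun t => f t ^ 2) (absOp (M i j))‖ *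
      Real.sqrt ‖cfc (fun t => g t ^ 2) (absOp (star (M i j)))‖ with ht'
  set A : Matrix (Fin n) (Fin n) ℂ := Matrix.of fun i j => ((t' i j : ℝ) : ℂ) with hA
  set T' := Matrix.toEuclideanCLM (𝕜 := ℂ) A with hT'
  have ht'0 : ∀ i j, 0 ≤ t' i j := fun i j => by positivity
  apply Real.sSup_le _ (nr_nonneg T')
  rintro r ⟨x, hx, rfl⟩
  -- H is nontrivial
  have hx0 : ∃ i, x i ≠ 0 := by
    by_contra hc
    push_neg at hc
    have : x = 0 := PiLp.ext hc
    rw [this] at hx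
    simp at hx
  obtain ⟨i0, hi0⟩ := hx0
  haveI : Nontrivial H := nontrivial_of_ne _ _ hi0
  -- the vector y
  set y : EuclideanSpace ℂ (Fin n) := (WithLp.equiv _ _).symm (fun i => ((‖x i‖ : ℝ) : ℂ)) with hy
  have hynorm : ‖y‖ = 1 := by
    rw [EuclideanSpace.norm_eq]
    have : ‖x‖ = Real.sqrt (∑ i, ‖x i‖ ^ 2) := by
      rw [PiLp.norm_eq_of_L2]
    rw [← hx, this]
    congr 1
    apply Finset.sum_congr rfl
    intro i _
    simp [hy, WithLp.equiv_symm_apply, PiLp.toLp_apply]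
  -- compute T' y
  have hT'y : ∀ i, T' y i = ∑ j, ((t' i j * ‖x j‖ : ℝ) : ℂ) := by
    intro i
    have := Matrix.toEuclideanCLM_toLp (𝕜 := ℂ) A (fun i => ((‖x i‖ : ℝ) : ℂ))
    rw [hT', hy, WithLp.equiv_symm_apply, this]
    simp only [PiLp.toLp_apply, Matrix.toLin'_apply, Matrix.mulVec,
      dotProduct, hA, Matrix.of_apply]
    push_cast
    rfl
  -- inner product with T'
  have hinner' : (inner ℂ (T' y) y : ℂ) = ((∑ i, ∑ j, t' i j * ‖x j‖ * ‖x i‖ : ℝ) : ℂ) := by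
    rw [PiLp.inner_apply]
    push_cast
    apply Finset.sum_congr rfl
    intro i _
    rw [hT'y i]
    simp only [RCLike.inner_apply, hy, WithLp.equiv_symm_apply, PiLp.toLp_apply]
    rw [map_sum]
    rw [Finset.mul_sum]
    push_cast
    apply Finset.sum_congr rfl
    intro j _
    rw [← Complex.ofReal_mul, Complex.conj_ofReal, mul_comm]
  have hinner'norm : ‖(inner ℂ (T' y) y : ℂ)‖ = ∑ i, ∑ j, t' i j * ‖x j‖ * ‖x i‖ := by
    rw [hinner', Complex.norm_real, Real.norm_of_nonneg]
    apply Finset.sum_nonneg; intro i _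
    apply Finset.sum_nonneg; intro j _
    have := ht'0 i j
    positivity
  -- expand inner ℂ (T x) x
  have hTx : (inner ℂ (T x) x : ℂ) = ∑ i, ∑ j, (inner ℂ (M i j (x j)) (x i) : ℂ) := by
    rw [PiLp.inner_apply]
    apply Finset.sum_congr rfl
    intro i _
    rw [hT x i, sum_inner]
  calc ‖(inner ℂ (T x) x : ℂ)‖ ≤ ∑ i, ∑ j, ‖(inner ℂ (M i j (x j)) (x i) : ℂ)‖ := by
        rw [hTx]
        exact (norm_sum_le _ _).trans (Finset.sum_le_sum fun i _ => norm_sum_le _ _)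
    _ ≤ ∑ i, ∑ j, t' i j * ‖x j‖ * ‖x i‖ := by
        apply Finset.sum_le_sum; intro i _
        apply Finset.sum_le_sum; intro j _
        calc ‖(inner ℂ (M i j (x j)) (x i) : ℂ)‖ ≤ ‖M i j (x j)‖ * ‖x i‖ :=
              norm_inner_le_norm _ _
          _ ≤ (‖M i j‖ * ‖x j‖) * ‖x i‖ := by
              gcongr; exact (M i j).le_opNorm _
          _ ≤ t' i j * ‖x j‖ * ‖x i‖ := by
              gcongr
              exact norm_le_key f g hf hg hf0 hg0 hfg (M i j)
    _ = ‖(inner ℂ (T' y) y : ℂ)‖ := hinner'norm.symm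
    _ ≤ nr T' := inner_le_nr T' y hynorm
end
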